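/- arXiv:1605.04722 — 3 statements merged into one kernel-verified Lean document; each statement's English description precedes it below -/
import Mathlib

section
/- Let d be a function on Λ-modules with values in ℕ ∪ {∞} satisfying conditions (d̃1) and (d2). Then d satisfies (d1): for every short exact sequence 0 → K → L → N → 0, if d(L) > d(K) then d(K) = d(N) + 1. -/
universe u

/-- A `d`-function: assigns to every `Λ`-module a value in `ℕ ∪ {∞}`. -/
abbrev DFun (Λ : Type u) [Ring Λ] :=
  (N : Type u) → [AddCommGroup N] → [Module Λ N] → ℕ∞

/-- Condition (d̃1): if `d L > d K` then `d K ≥ d N + 1`. -/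
def CondDt1 (Λ : Type u) [Ring Λ] (d : DFun Λ) : Prop :=
  ∀ (K L N : Type u) [AddCommGroup K] [Module Λ K] [AddCommGroup L] [Module Λ L]
    [AddCommGroup N] [Module Λ N] (f : K →ₗ[Λ] L) (g : L →ₗ[Λ] N),
    Function.Injective f → Function.Surjective g →
    LinearMap.range f = LinearMap.ker g →
    d K < d L → d N + 1 ≤ d K

/-- Condition (d1): if `d L > d K` then `d K = d N + 1`. -/
def CondD1 (Λ : Type u) [Ring Λ] (d : DFun Λ) : Prop :=
  ∀ (K L N : Type u) [AddCommGroup K] [Module Λ K] [AddCommGroup L] [Module Λ L]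
    [AddCommGroup N] [Module Λ N] (f : K →ₗ[Λ] L) (g : L →ₗ[Λ] N),
    Function.Injective f → Function.Surjective g →
    LinearMap.range f = LinearMap.ker g →
    d K < d L → d K = d N + 1

/-- Condition (d2): if `d L > d N` then `d K = d N + 1`. -/
def CondD2 (Λ : Type u) [Ring Λ] (d : DFun Λ) : Prop :=
  ∀ (K L N : Type u) [AddCommGroup K] [Module Λ K] [AddCommGroup L] [Module Λ L]
    [AddCommGroup N] [Module Λ N] (f : K →ₗ[Λ] L) (g : L →ₗ[Λ] N),
    Function.Injective f → Function.Surjective g →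
    LinearMap.range f = LinearMap.ker g →
    d N < d L → d K = d N + 1

/-- If `d` satisfies (d̃1) and (d2) then `d` satisfies (d1). -/
theorem stmt2 (Λ : Type u) [Ring Λ] (d : DFun Λ)
    (h1 : CondDt1 Λ d) (h2 : CondD2 Λ d) : CondD1 Λ d := by
  intro K L N _ _ _ _ _ _ f g hf hg hr hKL
  rcases lt_or_ge (d N) (d L) with hNL | hLN
  · exact h2 K L N f g hf hg hr hNL
  · have h := h1 K L N f g hf hg hr hKL
    have : d N + 1 ≤ d N := h.trans (hKL.le.trans hLN)
    have hN : d N = ⊤ := by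
      by_contra hne
      exact absurd this (by simp [ENat.add_one_le_iff hne])
    rw [hN, top_add, top_le_iff] at h
    rw [h] at hKL
    exact absurd hKL (by simp)
end

section
/- Let S be a nonempty set, f : S → ℕ ∪ {∞}, and suppose each d_p (p ∈ S) satisfies (d̃1). Then S̃^f satisfies (d̃1): for every short exact sequence 0 → K → L → N → 0, if S̃^f(L) > S̃^f(K) then S̃^f(K) ≥ S̃^f(N) + 1. -/
universe u v

/-- `S̃^f(N) = sup { i | d_p(N) ≥ min(i, f(p)) for all p ∈ S }`. -/
noncomputable def StildeF (Λ : Type u) [Ring Λ] {S : Type v} (d : S → DFun Λ)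
    (f : S → ℕ∞) (N : Type u) [AddCommGroup N] [Module Λ N] : ℕ∞ :=
  sSup {x : ℕ∞ | ∃ i : ℕ, x = (i : ℕ∞) ∧ ∀ p : S, min (i : ℕ∞) (f p) ≤ d p N}

/-- If `d_q M < f q` then `S̃^f(M) ≤ d_q M`. -/
lemma stildeF_le_of_lt {Λ : Type u} [Ring Λ] {S : Type v} (d : S → DFun Λ)
    (f : S → ℕ∞) (M : Type u) [AddCommGroup M] [Module Λ M] {q : S}
    (hq : d q M < f q) : StildeF Λ d f M ≤ d q M := by
  apply sSup_le
  rintro x ⟨i, rfl, hi⟩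
  by_contra h
  push_neg at h
  exact absurd (hi q) (not_le.mpr (lt_min h hq))

/-- If each `d_p` satisfies (d̃1), then `S̃^f` satisfies (d̃1). -/
theorem stmt10 (Λ : Type u) [Ring Λ] (S : Type v) [Nonempty S]
    (d : S → DFun Λ) (f : S → ℕ∞) (hd : ∀ p : S, CondDt1 Λ (d p)) :
    CondDt1 Λ (fun N _ _ => StildeF Λ d f N) := by
  intro K L N _ _ _ _ _ _ F G hF hG hrange hlt
  simp only at hlt ⊢
  -- Step 1: there is some `q` with `d q K < f q`.
  have h1 : ∃ q, d q K < f q := by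
    by_contra h
    push_neg at h
    have hall : ∀ n : ℕ, (n : ℕ∞) ≤ StildeF Λ d f K := fun n =>
      le_sSup ⟨n, rfl, fun p => (min_le_right _ _).trans (h p)⟩
    have htop : StildeF Λ d f K = ⊤ := by
      by_contra hne
      obtain ⟨a, ha⟩ := WithTop.ne_top_iff_exists.mp hne
      have := hall (a + 1)
      rw [← ha] at this
      exact absurd ((Nat.cast_le (α := ℕ∞)).mp this) (Nat.not_succ_le_self a)
    exact absurd htop (hlt.trans_le le_top).ne
  -- Step 2: pick `q` minimizing `d q K` among those with `d q K < f q`.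
  set A : Set ℕ := {n : ℕ | ∃ p, d p K < f p ∧ d p K = (n : ℕ∞)} with hA
  have hAne : A.Nonempty := by
    obtain ⟨q0, hq0⟩ := h1
    obtain ⟨n0, hn0⟩ := WithTop.ne_top_iff_exists.mp (hq0.trans_le le_top).ne
    exact ⟨n0, q0, hq0, hn0.symm⟩
  obtain ⟨q, hq, hqm⟩ : sInf A ∈ A := Nat.sInf_mem hAne
  have hmin : ∀ p (n : ℕ), d p K < f p → d p K = (n : ℕ∞) → sInf A ≤ n :=
    fun p n h e => Nat.sInf_le ⟨p, h, e⟩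
  -- Step 3: `S̃^f(K) = d q K`.
  have h3 : ((sInf A : ℕ) : ℕ∞) ≤ StildeF Λ d f K := by
    apply le_sSup
    refine ⟨sInf A, rfl, fun p => ?_⟩
    by_cases hp : d p K < f p
    · obtain ⟨n, hn⟩ := WithTop.ne_top_iff_exists.mp (hp.trans_le le_top).ne
      have hle : sInf A ≤ n := hmin p n hp hn.symm
      rw [← hn]
      exact (min_le_left _ _).trans ((Nat.cast_le (α := ℕ∞)).mpr hle)
    · exact (min_le_right _ _).trans (not_lt.mp hp)
  have hKeq : StildeF Λ d f K = d q K :=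
    le_antisymm (stildeF_le_of_lt d f K hq) (hqm ▸ h3)
  -- Step 4: `d q K < d q L`.
  have h4 : d q K < d q L := by
    by_contra h
    push_neg at h
    have : StildeF Λ d f L ≤ d q K :=
      (stildeF_le_of_lt d f L (h.trans_lt hq)).trans h
    exact absurd (hlt.trans_le this) (by rw [hKeq]; exact lt_irrefl _)
  -- Step 5: apply (d̃1) for `d q`.
  have h5 : d q N + 1 ≤ d q K := hd q K L N F G hF hG hrange h4
  -- Step 6: `d q N < f q`.
  have hNtop : d q N ≠ ⊤ := by
    intro h
    rw [h, top_add] at h5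
    exact absurd (top_le_iff.mp h5) (hq.trans_le le_top).ne
  have h6 : d q N < f q := (((ENat.add_one_le_iff hNtop).mp h5).trans hq)
  -- Step 7: conclude.
  calc StildeF Λ d f N + 1 ≤ d q N + 1 :=
        add_le_add_left (stildeF_le_of_lt d f N h6) 1
    _ ≤ d q K := h5
    _ = StildeF Λ d f K := hKeq.symm
end

section
/- Let d be a function on modules over a ring Λ satisfying (d̃1) and (d3). If C is a Λ-module and C' is a direct summand of a finite direct sum of copies of C, then d(C') ≥ d(C); in particular, for the collection d_p satisfying (d̃1) and (d3) for all p in a set S, one has d_p(C') ≥ min(i, d_p(C)) for every integer i and p, so S̃^C(C') = ∞ and i ≤ T^{X_i(C)}(C') for all i, where X_i(C) = { p ∈ S | d_p(C) ≥ i }. -/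
universe u v

/-- Condition (d3): if `d L < d N` then `d K ≤ d L`. -/
def CondD3 (Λ : Type u) [Ring Λ] (d : DFun Λ) : Prop :=
  ∀ (K L N : Type u) [AddCommGroup K] [Module Λ K] [AddCommGroup L] [Module Λ L]
    [AddCommGroup N] [Module Λ N] (f : K →ₗ[Λ] L) (g : L →ₗ[Λ] N),
    Function.Injective f → Function.Surjective g →
    LinearMap.range f = LinearMap.ker g →
    d L < d N → d K ≤ d L

/-- `X` is a direct summand of a finite direct sum of copies of `C`. -/
def IsSummandOfCopies (Λ : Type u) [Ring Λ] (C : Type u) [AddCommGroup C] [Module Λ C]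
    (X : Type u) [AddCommGroup X] [Module Λ X] : Prop :=
  ∃ (k : ℕ) (ι : X →ₗ[Λ] (Fin k → C)) (π : (Fin k → C) →ₗ[Λ] X),
    π.comp ι = LinearMap.id

/-- `T^U(N) = inf { d_p(N) | p ∈ U }` (infimum over the empty set is `∞`). -/
noncomputable def TU (Λ : Type u) [Ring Λ] {S : Type v} (d : S → DFun Λ)
    (U : Set S) (N : Type u) [AddCommGroup N] [Module Λ N] : ℕ∞ :=
  ⨅ p : U, d p N

/-- If `π : L → K` is a split surjection (with section `ι`), then `d L ≤ d K`.
This only uses condition (d̃1). -/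
lemma dle_of_split {Λ : Type u} [Ring Λ] {d : DFun Λ} (h1 : CondDt1 Λ d)
    (K L : Type u) [AddCommGroup K] [Module Λ K] [AddCommGroup L] [Module Λ L]
    (π : L →ₗ[Λ] K) (ι : K →ₗ[Λ] L) (hπι : π.comp ι = LinearMap.id) :
    d L ≤ d K := by
  by_contra h
  push_neg at h
  -- h : d K < d L
  have hsec : ∀ x : K, π (ι x) = x := fun x => LinearMap.congr_fun hπι x
  set N := ↥(LinearMap.ker π) with hN
  -- second sequence 0 → K → L → N → 0
  have hmem : ∀ x : L, x - ι (π x) ∈ LinearMap.ker π := by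
    intro x
    simp [LinearMap.mem_ker, hsec]
  let g2 : L →ₗ[Λ] N := LinearMap.codRestrict (LinearMap.ker π)
    (LinearMap.id - ι.comp π) hmem
  have hg2app : ∀ x : L, ((g2 x : L)) = x - ι (π x) := fun x => rfl
  have hιinj : Function.Injective ι :=
    Function.LeftInverse.injective hsec
  have hg2surj : Function.Surjective g2 := by
    rintro ⟨n, hn⟩
    refine ⟨n, ?_⟩
    apply Subtype.ext
    rw [hg2app]
    rw [LinearMap.mem_ker] at hn
    simp [hn]
  have hrange2 : LinearMap.range ι = LinearMap.ker g2 := by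
    ext x
    constructor
    · rintro ⟨y, rfl⟩
      rw [LinearMap.mem_ker]
      apply Subtype.ext
      rw [hg2app, hsec, sub_self]
      rfl
    · intro hx
      rw [LinearMap.mem_ker] at hx
      have : (g2 x : L) = 0 := by rw [hx]; rfl
      rw [hg2app, sub_eq_zero] at this
      exact ⟨π x, this.symm⟩
  have step2 : d N + 1 ≤ d K := h1 K L N ι g2 hιinj hg2surj hrange2 h
  have hKne : d K ≠ ⊤ := h.ne_top.imp_symm fun _ => by simp_all
  have hKne' : d K ≠ ⊤ := LT.lt.ne_top h
  have hNne : d N ≠ ⊤ := by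
    intro hNt
    rw [hNt] at step2
    simp at step2
    exact hKne' step2
  have hNK : d N < d K := lt_of_lt_of_le (ENat.lt_add_one_iff hNne |>.mpr le_rfl) step2
  -- first sequence 0 → N → L → K → 0
  have hrange1 : LinearMap.range (LinearMap.ker π).subtype = LinearMap.ker π :=
    Submodule.range_subtype _
  have hπsurj : Function.Surjective π := fun x => ⟨ι x, hsec x⟩
  have step1 : d K + 1 ≤ d N :=
    h1 N L K (LinearMap.ker π).subtype π (Submodule.injective_subtype _) hπsurj
      hrange1 (hNK.trans h)
  have hKN : d K < d N := lt_of_lt_of_le (ENat.lt_add_one_iff hKne' |>.mpr le_rfl) step1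
  exact lt_asymm hNK hKN

/-- `d` is invariant under linear isomorphism. -/
lemma d_congr {Λ : Type u} [Ring Λ] {d : DFun Λ} (h1 : CondDt1 Λ d)
    (K L : Type u) [AddCommGroup K] [Module Λ K] [AddCommGroup L] [Module Λ L]
    (e : K ≃ₗ[Λ] L) : d K = d L := by
  apply le_antisymm
  · exact dle_of_split h1 L K e.toLinearMap e.symm.toLinearMap (by ext x; simp)
  · exact dle_of_split h1 K L e.symm.toLinearMap e.toLinearMap (by ext x; simp)

/-- `d C ≤ d (C^{s+1})`. -/
lemma d_le_pow {Λ : Type u} [Ring Λ] {d : DFun Λ} (h1 : CondDt1 Λ d) (h3 : CondD3 Λ d)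
    (C : Type u) [AddCommGroup C] [Module Λ C] :
    ∀ s : ℕ, d C ≤ d (Fin (s + 1) → C) := by
  intro s
  induction s with
  | zero =>
    exact le_of_eq (d_congr h1 C (Fin 1 → C) (LinearEquiv.funUnique (Fin 1) Λ C).symm)
  | succ s ih =>
    by_contra h
    push_neg at h
    -- h : d (Fin (s+2) → C) < d C
    have hlt : d (Fin (s + 2) → C) < d (Fin (s + 1) → C) := lt_of_lt_of_le h ih
    -- exact sequence 0 → C → C^{s+2} → C^{s+1} → 0
    let f : C →ₗ[Λ] (Fin (s + 2) → C) := LinearMap.single Λ (fun _ => C) 0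
    let g : (Fin (s + 2) → C) →ₗ[Λ] (Fin (s + 1) → C) :=
      LinearMap.funLeft Λ C Fin.succ
    have hfinj : Function.Injective f := by
      intro a b hab
      have := congrFun hab (0 : Fin (s + 2))
      simpa [f] using this
    have hgsurj : Function.Surjective g :=
      LinearMap.funLeft_surjective_of_injective Λ C _ (Fin.succ_injective _)
    have hrange : LinearMap.range f = LinearMap.ker g := by
      ext v
      constructor
      · rintro ⟨c, rfl⟩
        rw [LinearMap.mem_ker]
        funext i
        simp only [g, f, LinearMap.funLeft_apply, LinearMap.coe_single]
        simp [Pi.single_eq_of_ne (Fin.succ_ne_zero i)]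
      · intro hv
        rw [LinearMap.mem_ker] at hv
        refine ⟨v 0, ?_⟩
        funext j
        simp only [f, LinearMap.coe_single]
        rcases eq_or_ne j 0 with rfl | hj
        · simp
        · obtain ⟨i, rfl⟩ := Fin.exists_succ_eq.mpr hj
          rw [Pi.single_eq_of_ne (Fin.succ_ne_zero i)]
          exact (congrFun hv i).symm
    have := h3 C (Fin (s + 2) → C) (Fin (s + 1) → C) f g hfinj hgsurj hrange hlt
    exact absurd this (not_le.mpr h)

/-- Key inequality: `d C ≤ d C'` when `C'` is a summand of copies of `C`. -/
lemma d_le_summand {Λ : Type u} [Ring Λ] {d : DFun Λ} (h1 : CondDt1 Λ d) (h3 : CondD3 Λ d)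
    (C : Type u) [AddCommGroup C] [Module Λ C]
    (C' : Type u) [AddCommGroup C'] [Module Λ C']
    (hC' : IsSummandOfCopies Λ C C') : d C ≤ d C' := by
  obtain ⟨k, ι, π, hπι⟩ := hC'
  match k with
  | 0 =>
    -- `C'` is the zero module
    have hsub : Subsingleton C' := by
      constructor
      intro a b
      have ha := LinearMap.congr_fun hπι a
      have hb := LinearMap.congr_fun hπι b
      have : ι a = ι b := funext fun i => i.elim0
      simp only [LinearMap.coe_comp, Function.comp_apply, LinearMap.id_coe, id_eq] at ha hb
      rw [← ha, ← hb, this]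
    refine dle_of_split h1 C' C 0 0 ?_
    ext x
    exact Subsingleton.elim _ _
  | s + 1 =>
    exact (d_le_pow h1 h3 C s).trans (dle_of_split h1 C' (Fin (s + 1) → C) π ι hπι)

/-- Proposition 2.3(1).  If each `d_p` satisfies (d̃1) and (d3) and `C'` is a
direct summand of a finite direct sum of copies of `C`, then `d_p(C') ≥ d_p(C)`
for all `p`; in particular `d_p(C') ≥ min(i, d_p(C))` for every `i` and `p`,
`S̃^C(C') = ∞`, and `i ≤ T^{X_i(C)}(C')` for every `i`,
where `X_i(C) = { p ∈ S | d_p(C) ≥ i }`. -/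
theorem stmt12 (Λ : Type u) [Ring Λ] (S : Type v) [Nonempty S]
    (d : S → DFun Λ)
    (hdt1 : ∀ p : S, CondDt1 Λ (d p)) (hd3 : ∀ p : S, CondD3 Λ (d p))
    (C : Type u) [AddCommGroup C] [Module Λ C]
    (C' : Type u) [AddCommGroup C'] [Module Λ C']
    (hC' : IsSummandOfCopies Λ C C') :
    (∀ p : S, d p C ≤ d p C') ∧
    (∀ (i : ℕ) (p : S), min (i : ℕ∞) (d p C) ≤ d p C') ∧
    StildeF Λ d (fun p => d p C) C' = ⊤ ∧
    (∀ i : ℕ, (i : ℕ∞) ≤ TU Λ d {p : S | (i : ℕ∞) ≤ d p C} C') := by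
  have h1 : ∀ p : S, d p C ≤ d p C' := fun p => d_le_summand (hdt1 p) (hd3 p) C C' hC'
  have h2 : ∀ (i : ℕ) (p : S), min (i : ℕ∞) (d p C) ≤ d p C' := fun i p =>
    (min_le_right _ _).trans (h1 p)
  refine ⟨h1, h2, ?_, ?_⟩
  · rw [StildeF, sSup_eq_top]
    intro b hb
    obtain ⟨n, rfl⟩ := WithTop.ne_top_iff_exists.mp hb.ne |>.imp fun n h => h.symm
    exact ⟨((n + 1 : ℕ) : ℕ∞), ⟨n + 1, rfl, fun p => h2 (n + 1) p⟩,
      Nat.cast_lt.mpr (Nat.lt_succ_self n)⟩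
  · intro i
    rw [TU]
    refine le_iInf ?_
    rintro ⟨p, hp⟩
    have := h2 i p
    rwa [min_eq_left hp] at this
end
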